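/- Let s ≥ 3 and s+2 ≤ t ≤ 2s-1 be integers and suppose (s,t) is regular. Then v(Q_1) = 0 and v(Q_2) ≤ 0, i.e. t + (δ + s(α-1)) + (C(t,2) - C(s,2))(δ + 2(α-1)) - (δ + 2α) = 0 and t + (δ + s(α-1)) + (δ + (t-s+1)(α-1)) + (C(t,2) - C(s,2) - C(t-s+1,2))(δ + 2(α-1)) - (δ + 2α) ≤ 0, where C(a,2) = a(a-1)/2. -/

import Mathlib

/-- The pair `(s,t)` is regular if `s ≥ 11` and `s+3 ≤ t ≤ 2s-4`, or if
`(s,t) ∈ {(10,14),(10,15)}`. -/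
def IsRegularPair (s t : ℕ) : Prop :=
  (11 ≤ s ∧ s + 3 ≤ t ∧ t ≤ 2 * s - 4) ∨ (s = 10 ∧ t = 14) ∨ (s = 10 ∧ t = 15)


private lemma aux_g_nonneg (a u : ℝ) (hs : 11 ≤ a) (hu : 3 ≤ u) (huc : u ≤ a - 4) :
    0 ≤ (u-2)*a^2 - (u^2+3*u-6)*a + (2*u^2+u-4) := by
  nlinarith [mul_nonneg (sub_nonneg.2 hs) (sub_nonneg.2 hu),
    mul_nonneg (sub_nonneg.2 hs) (sub_nonneg.2 huc),
    mul_nonneg (sub_nonneg.2 hu) (sub_nonneg.2 huc), sq_nonneg (a-u-4), sq_nonneg (u-3),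
    mul_nonneg (mul_nonneg (sub_nonneg.2 hu) (sub_nonneg.2 huc)) (sub_nonneg.2 hs),
    mul_nonneg (mul_nonneg (sub_nonneg.2 hs) (sub_nonneg.2 hu)) (sub_nonneg.2 huc)]

open Classical in
/-- The exponent `α = α_{s,t}`. -/
noncomputable def ERalpha (s t : ℕ) : ℝ :=
  if IsRegularPair s t then
    (((s : ℝ) - 2) * ((t : ℝ) - (s : ℝ)) * ((t : ℝ) + (s : ℝ) - 1) + 2 * (t : ℝ) - 2 * (s : ℝ)) /
      ((2 * (s : ℝ) - 3) * ((t : ℝ) - (s : ℝ)) * ((t : ℝ) + (s : ℝ) - 1) - 2 * (s : ℝ) + 4)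
  else
    (((s : ℝ) - 2) * ((t : ℝ) - (s : ℝ)) * ((s : ℝ) - 1) + (s : ℝ) - 1) /
      ((2 * (s : ℝ) - 3) * ((t : ℝ) - (s : ℝ)) * ((s : ℝ) - 1) + 2 * (s : ℝ) - (t : ℝ))

/-- `δ = s - (2s-1)α`. -/
noncomputable def ERdelta (s t : ℕ) : ℝ := (s : ℝ) - (2 * (s : ℝ) - 1) * ERalpha s t

/-- `η = 2(1-α) - δ`. -/
noncomputable def EReta (s t : ℕ) : ℝ := 2 * (1 - ERalpha s t) - ERdelta s t

/-- **Lemma (extremal, regular case).** If `(s,t)` is regular, then `v(Q_1) = 0` and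
`v(Q_2) ≤ 0`. -/
theorem extremal_scheme_regular (s t : ℕ) (hs : 3 ≤ s) (ht1 : s + 2 ≤ t)
    (ht2 : t ≤ 2 * s - 1) (hreg : IsRegularPair s t) :
    (t : ℝ) + (ERdelta s t + (s : ℝ) * (ERalpha s t - 1)) +
        ((t : ℝ) * ((t : ℝ) - 1) / 2 - (s : ℝ) * ((s : ℝ) - 1) / 2) *
          (ERdelta s t + 2 * (ERalpha s t - 1)) -
        (ERdelta s t + 2 * ERalpha s t) = 0 ∧
    (t : ℝ) + (ERdelta s t + (s : ℝ) * (ERalpha s t - 1)) +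
        (ERdelta s t + ((t : ℝ) - (s : ℝ) + 1) * (ERalpha s t - 1)) +
        ((t : ℝ) * ((t : ℝ) - 1) / 2 - (s : ℝ) * ((s : ℝ) - 1) / 2 -
            ((t : ℝ) - (s : ℝ) + 1) * ((t : ℝ) - (s : ℝ)) / 2) *
          (ERdelta s t + 2 * (ERalpha s t - 1)) -
        (ERdelta s t + 2 * ERalpha s t) ≤ 0 := by
  obtain ⟨h1, h2, h3⟩ | ⟨rfl, rfl⟩ | ⟨rfl, rfl⟩ := hreg
  · -- generic regular case
    have ha : (11:ℝ) ≤ (s:ℝ) := by exact_mod_cast h1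
    have hb : (s:ℝ) + 3 ≤ (t:ℝ) := by exact_mod_cast h2
    have hb2 : (t:ℝ) ≤ 2*(s:ℝ) - 4 := by
      have h4 : t + 4 ≤ 2*s := by omega
      have : (t:ℝ) + 4 ≤ 2*(s:ℝ) := by exact_mod_cast h4
      linarith
    have hD : (0:ℝ) < (2 * (s : ℝ) - 3) * ((t : ℝ) - (s : ℝ)) * ((t : ℝ) + (s : ℝ) - 1)
        - 2 * (s : ℝ) + 4 := by
      have p1 : (0:ℝ) < 2 * (s:ℝ) - 3 := by linarith
      have p2 : (0:ℝ) < (t:ℝ) - (s:ℝ) := by linarith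
      have p3 : (0:ℝ) < (t:ℝ) + (s:ℝ) - 1 := by linarith
      have q : (72:ℝ) ≤ ((t:ℝ) - (s:ℝ)) * ((t:ℝ) + (s:ℝ) - 1) := by nlinarith
      have q2 := mul_le_mul_of_nonneg_left q p1.le
      nlinarith [q2]
    have hreg' : IsRegularPair s t := Or.inl ⟨h1, h2, h3⟩
    have hα : ERalpha s t =
        (((s : ℝ) - 2) * ((t : ℝ) - (s : ℝ)) * ((t : ℝ) + (s : ℝ) - 1) + 2 * (t : ℝ)
          - 2 * (s : ℝ)) /
        ((2 * (s : ℝ) - 3) * ((t : ℝ) - (s : ℝ)) * ((t : ℝ) + (s : ℝ) - 1)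
          - 2 * (s : ℝ) + 4) := by
      rw [ERalpha, if_pos hreg']
    have hδ : ERdelta s t = (s : ℝ) - (2 * (s : ℝ) - 1) * ERalpha s t := rfl
    constructor
    · rw [hδ, hα]
      set D := ((2 * (s : ℝ) - 3) * ((t : ℝ) - (s : ℝ)) * ((t : ℝ) + (s : ℝ) - 1)
          - 2 * (s : ℝ) + 4) with hDdef
      have hDne : D ≠ 0 := hD.ne'
      field_simp
      rw [hDdef]
      ring
    · have hg : (0:ℝ) ≤ ((t:ℝ)-(s:ℝ)-1) *
          (((t:ℝ)-(s:ℝ)-2)*(s:ℝ)^2 - (((t:ℝ)-(s:ℝ))^2+3*((t:ℝ)-(s:ℝ))-6)*(s:ℝ)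
            + (2*((t:ℝ)-(s:ℝ))^2+((t:ℝ)-(s:ℝ))-4)) := by
        have := aux_g_nonneg (s:ℝ) ((t:ℝ)-(s:ℝ)) ha (by linarith) (by linarith)
        have h5 : (0:ℝ) ≤ (t:ℝ)-(s:ℝ)-1 := by linarith
        nlinarith [mul_nonneg h5 this]
      have h2' : (-(((t:ℝ)-(s:ℝ)-1) *
          (((t:ℝ)-(s:ℝ)-2)*(s:ℝ)^2 - (((t:ℝ)-(s:ℝ))^2+3*((t:ℝ)-(s:ℝ))-6)*(s:ℝ)
            + (2*((t:ℝ)-(s:ℝ))^2+((t:ℝ)-(s:ℝ))-4)))) /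
          ((2 * (s : ℝ) - 3) * ((t : ℝ) - (s : ℝ)) * ((t : ℝ) + (s : ℝ) - 1)
            - 2 * (s : ℝ) + 4) ≤ 0 :=
        div_nonpos_of_nonpos_of_nonneg (by linarith) hD.le
      refine le_trans (le_of_eq ?_) h2'
      rw [hδ, hα]
      set D := ((2 * (s : ℝ) - 3) * ((t : ℝ) - (s : ℝ)) * ((t : ℝ) + (s : ℝ) - 1)
          - 2 * (s : ℝ) + 4) with hDdef
      have hDne : D ≠ 0 := hD.ne'
      field_simp
      rw [hDdef]
      ring
  · -- (s,t) = (10,14)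
    have hreg' : IsRegularPair 10 14 := Or.inr (Or.inl ⟨rfl, rfl⟩)
    rw [ERdelta, ERalpha, if_pos hreg']
    norm_num
  · -- (s,t) = (10,15)
    have hreg' : IsRegularPair 10 15 := Or.inr (Or.inr ⟨rfl, rfl⟩)
    rw [ERdelta, ERalpha, if_pos hreg']
    norm_num
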